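/- Let Δ : [0,∞) → ℝ be continuous, bounded, and nonnegative, with ∫₀^{t_c} Δ(s)² ds ≥ ε > 0 for some t_c > 0, and let ω(t) = exp(−∫₀ᵗ Δ(s)² ds). Define Δ^e(t) := Δ(t) + k(1 − ω(t)) with k > 0. Then Δ^e is persistently exciting: there exist T, δ > 0 such that ∫_t^{t+T} (Δ^e(s))² ds ≥ δ for all t ≥ 0. -/
import Mathlib


open MeasureTheory

noncomputable section

theorem stmt12
    (Δ : ℝ → ℝ) (hcont : Continuous Δ) (hbdd : ∃ M : ℝ, ∀ t, |Δ t| ≤ M)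
    (hnn : ∀ t, 0 ≤ Δ t)
    (t_c ε : ℝ) (htc : 0 < t_c) (hε : 0 < ε)
    (hIE : ε ≤ ∫ s in (0:ℝ)..t_c, (Δ s) ^ 2)
    (ω : ℝ → ℝ) (hω : ∀ t, ω t = Real.exp (-∫ s in (0:ℝ)..t, (Δ s) ^ 2))
    (k : ℝ) (hk : 0 < k)
    (Δe : ℝ → ℝ) (hΔe : ∀ t, Δe t = Δ t + k * (1 - ω t)) :
    ∃ T > (0:ℝ), ∃ δ > (0:ℝ), ∀ t ≥ (0:ℝ), δ ≤ ∫ s in t..(t + T), (Δe s) ^ 2 := by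
  have hsq : Continuous (fun s => (Δ s) ^ 2) := (hcont.pow 2)
  have hInt : ∀ a b : ℝ, IntervalIntegrable (fun s => (Δ s) ^ 2) volume a b :=
    fun a b => hsq.intervalIntegrable a b
  -- continuity of ω
  have hprim : Continuous (fun t => ∫ s in (0:ℝ)..t, (Δ s) ^ 2) :=
    intervalIntegral.continuous_primitive hInt 0
  have hωcont : Continuous ω := by
    have : Continuous (fun t => Real.exp (-∫ s in (0:ℝ)..t, (Δ s) ^ 2)) :=
      Real.continuous_exp.comp hprim.neg
    exact (funext hω ▸ this)
  have hΔecont : Continuous Δe := by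
    have : Continuous (fun t => Δ t + k * (1 - ω t)) :=
      hcont.add (continuous_const.mul (continuous_const.sub hωcont))
    exact (funext hΔe ▸ this)
  have hΔeInt : ∀ a b : ℝ, IntervalIntegrable (fun s => (Δe s) ^ 2) volume a b :=
    fun a b => ((hΔecont.pow 2)).intervalIntegrable a b
  set c : ℝ := (k * (1 - Real.exp (-ε))) ^ 2 with hc
  have hexp : Real.exp (-ε) < 1 := by
    have : -ε < 0 := by linarith
    simpa using Real.exp_lt_one_iff.mpr this
  have hcpos : 0 < c := by
    apply pow_pos
    exact mul_pos hk (by linarith)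
  -- key: for s ≥ t_c, c ≤ (Δe s)^2
  have key : ∀ s : ℝ, t_c ≤ s → c ≤ (Δe s) ^ 2 := by
    intro s hs
    have hεs : ε ≤ ∫ u in (0:ℝ)..s, (Δ u) ^ 2 := by
      have hsplit : (∫ u in (0:ℝ)..s, (Δ u) ^ 2)
          = (∫ u in (0:ℝ)..t_c, (Δ u) ^ 2) + ∫ u in t_c..s, (Δ u) ^ 2 :=
        (intervalIntegral.integral_add_adjacent_intervals (hInt 0 t_c) (hInt t_c s)).symm
      have hnn2 : 0 ≤ ∫ u in t_c..s, (Δ u) ^ 2 :=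
        intervalIntegral.integral_nonneg hs (fun u _ => sq_nonneg _)
      linarith
    have hωs : ω s ≤ Real.exp (-ε) := by
      rw [hω s]
      exact Real.exp_le_exp.mpr (by linarith)
    have h1 : k * (1 - Real.exp (-ε)) ≤ Δe s := by
      rw [hΔe s]
      have : k * (1 - Real.exp (-ε)) ≤ k * (1 - ω s) :=
        mul_le_mul_of_nonneg_left (by linarith) hk.le
      have := hnn s
      linarith
    have h0 : 0 ≤ k * (1 - Real.exp (-ε)) := le_of_lt (mul_pos hk (by linarith))
    calc c = (k * (1 - Real.exp (-ε))) ^ 2 := rfl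
      _ ≤ (Δe s) ^ 2 := by
        apply pow_le_pow_left₀ h0 h1
  refine ⟨2 * t_c, by linarith, c * t_c, mul_pos hcpos htc, ?_⟩
  intro t ht
  set m : ℝ := max t t_c with hm
  have htm : t ≤ m := le_max_left _ _
  have htcm : t_c ≤ m := le_max_right _ _
  have hm2 : m ≤ t + 2 * t_c := max_le (by linarith) (by linarith)
  have hsplit : (∫ s in t..(t + 2 * t_c), (Δe s) ^ 2)
      = (∫ s in t..m, (Δe s) ^ 2) + ∫ s in m..(t + 2 * t_c), (Δe s) ^ 2 :=
    (intervalIntegral.integral_add_adjacent_intervals (hΔeInt t m) (hΔeInt m (t + 2 * t_c))).symm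
  have h1 : 0 ≤ ∫ s in t..m, (Δe s) ^ 2 :=
    intervalIntegral.integral_nonneg htm (fun u _ => sq_nonneg _)
  have h2 : c * (t + 2 * t_c - m) ≤ ∫ s in m..(t + 2 * t_c), (Δe s) ^ 2 := by
    have := intervalIntegral.integral_mono_on hm2
      (intervalIntegrable_const : IntervalIntegrable (fun _ => c) volume m (t + 2 * t_c))
      (hΔeInt m (t + 2 * t_c))
      (fun s hs => key s (le_trans htcm hs.1))
    simpa [intervalIntegral.integral_const, smul_eq_mul, mul_comm] using this
  have hlen : t_c ≤ t + 2 * t_c - m := by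
    have : m ≤ t + t_c := max_le (by linarith) (by linarith)
    linarith
  have : c * t_c ≤ c * (t + 2 * t_c - m) :=
    mul_le_mul_of_nonneg_left hlen hcpos.le
  linarith
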